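/- arXiv:1608.06593 — 7 statements merged into one kernel-verified Lean document; each statement's English description precedes it below -/
import Mathlib

section
/- (Lemma 1) If n is a product of N ≥ 3 pairwise distinct prime numbers (i.e., n is squarefree with at least three prime divisors), then X(n) < 0. -/
/-- Sum of the distinct prime divisors of `n`. -/
def primeSum (n : ℕ) : ℕ := ∑ p ∈ n.primeFactors, p

/-- Sum of the positive divisors of `n` which are not prime (including `1`,
and including `n` itself whenever `n` is not prime). -/
def compositeSum (n : ℕ) : ℕ := ∑ d ∈ n.divisors.filter (fun d => ¬ d.Prime), d

/-- The map `X(n) = Π(n) − C(n) + n`, regarded as an integer. -/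
def X (n : ℕ) : ℤ := (primeSum n : ℤ) - (compositeSum n : ℤ) + n

lemma aux_pow_X : ∀ j : ℕ, j + 3 ≤ 3 ^ (j + 1) := by
  intro j
  induction j with
  | zero => norm_num
  | succ m ih =>
    have : 3 ^ (m + 1) ≤ 3 ^ (m + 2) := Nat.pow_le_pow_right (by norm_num) (by omega)
    omega

theorem X_neg_of_squarefree_three_primeFactors (n : ℕ) (hsf : Squarefree n)
    (h3 : 3 ≤ n.primeFactors.card) : X n < 0 := by
  classical
  have hn0 : n ≠ 0 := hsf.ne_zero
  set P := n.primeFactors with hP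
  have hPne : P.Nonempty := Finset.card_pos.mp (by omega)
  set p0 := P.min' hPne with hp0
  have hp0mem : p0 ∈ P := P.min'_mem hPne
  have hp0prime : p0.Prime := Nat.prime_of_mem_primeFactors hp0mem
  set Q := P.erase p0 with hQ
  have hcardQ : Q.card = P.card - 1 := Finset.card_erase_of_mem hp0mem
  have hk : 2 ≤ Q.card := by omega
  have hQne : Q.Nonempty := Finset.card_pos.mp (by omega)
  set M := Q.max' hQne with hM
  have hMmem : M ∈ Q := Q.max'_mem hQne
  have hQ3 : ∀ q ∈ Q, 3 ≤ q := by
    intro q hq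
    have hqP : q ∈ P := Finset.mem_of_mem_erase hq
    have hqprime : q.Prime := Nat.prime_of_mem_primeFactors hqP
    have hqne : q ≠ p0 := Finset.ne_of_mem_erase hq
    have hle : p0 ≤ q := P.min'_le q hqP
    have h2 : 2 ≤ q := hqprime.two_le
    have h2' : 2 ≤ p0 := hp0prime.two_le
    omega
  set t := ∏ q ∈ Q, q with ht
  have hprod : p0 * t = n := by
    calc p0 * t = ∏ q ∈ P, q := Finset.mul_prod_erase P (fun x => x) hp0mem
      _ = n := by rw [hP]; exact Nat.prod_primeFactors_of_squarefree hsf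
  -- t = M * (product over Q.erase M)
  have hsplit : M * ∏ q ∈ Q.erase M, q = t := Finset.mul_prod_erase Q (fun x => x) hMmem
  have hrest : 3 ^ (Q.erase M).card ≤ ∏ q ∈ Q.erase M, q :=
    Finset.pow_card_le_prod _ _ _ (fun q hq => hQ3 q (Finset.mem_of_mem_erase hq))
  have hcardE : (Q.erase M).card = Q.card - 1 := Finset.card_erase_of_mem hMmem
  have hMge : 3 ≤ M := hQ3 M hMmem
  have hpow : Q.card + 1 ≤ 3 ^ (Q.card - 1) := by
    have := aux_pow_X (Q.card - 2)
    have h1 : Q.card - 2 + 3 = Q.card + 1 := by omega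
    have h2 : Q.card - 2 + 1 = Q.card - 1 := by omega
    rw [h1, h2] at this
    exact this
  have htge : (Q.card + 1) * M ≤ t := by
    calc (Q.card + 1) * M ≤ 3 ^ (Q.card - 1) * M := by
          exact Nat.mul_le_mul_right M hpow
      _ ≤ (∏ q ∈ Q.erase M, q) * M := by
          apply Nat.mul_le_mul_right
          rw [← hcardE]; exact hrest
      _ = M * ∏ q ∈ Q.erase M, q := by ring
      _ = t := hsplit
  -- sum bound
  have hsumQ : ∑ q ∈ Q, q ≤ Q.card * M := by
    have := Finset.sum_le_card_nsmul Q id M (fun q hq => Q.le_max' q hq)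
    simpa [smul_eq_mul] using this
  have hp0M : p0 < M := by
    have hle : p0 ≤ M := P.min'_le M (Finset.mem_of_mem_erase hMmem)
    have hne : M ≠ p0 := Finset.ne_of_mem_erase hMmem
    omega
  have hprimeSum : primeSum n = p0 + ∑ q ∈ Q, q := by
    rw [primeSum, ← hP, ← Finset.add_sum_erase _ _ hp0mem, hQ]
  have hps_lt : primeSum n + 1 ≤ t := by
    have : primeSum n ≤ (M - 1) + Q.card * M := by
      rw [hprimeSum]; omega
    have h2 : (M - 1) + Q.card * M + 1 ≤ (Q.card + 1) * M := by
      have : (Q.card + 1) * M = Q.card * M + M := by ring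
      omega
    omega
  -- t and n are non-prime divisors
  have ht1 : 1 < t := by
    have : 3 * 1 ≤ (Q.card + 1) * M := Nat.mul_le_mul (by omega) (by omega)
    omega
  have htn : t < n := by
    have h2 : 2 ≤ p0 := hp0prime.two_le
    nlinarith [hprod]
  have htdvd : t ∣ n := ⟨p0, by rw [← hprod]; ring⟩
  have htnotprime : ¬ t.Prime := by
    intro htp
    obtain ⟨q1, hq1, q2, hq2, hq12⟩ := Finset.one_lt_card.mp (by omega : 1 < Q.card)
    have hd1 : q1 ∣ t := Finset.dvd_prod_of_mem _ hq1
    have hd2 : q2 ∣ t := Finset.dvd_prod_of_mem _ hq2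
    have hq1p : q1.Prime := Nat.prime_of_mem_primeFactors (Finset.mem_of_mem_erase hq1)
    have hq2p : q2.Prime := Nat.prime_of_mem_primeFactors (Finset.mem_of_mem_erase hq2)
    have e1 : q1 = t := (Nat.prime_dvd_prime_iff_eq hq1p htp).mp hd1
    have e2 : q2 = t := (Nat.prime_dvd_prime_iff_eq hq2p htp).mp hd2
    exact hq12 (e1.trans e2.symm)
  have hnnotprime : ¬ n.Prime := by
    intro hnp
    have : n.primeFactors = {n} := hnp.primeFactors
    rw [← hP] at *
    rw [this] at h3
    simp at h3
  -- subset of composite divisors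
  set D := n.divisors.filter (fun d => ¬ d.Prime) with hD
  have h1D : (1 : ℕ) ∈ D := by
    rw [hD, Finset.mem_filter]
    exact ⟨Nat.one_mem_divisors.mpr hn0, Nat.not_prime_one⟩
  have htD : t ∈ D := by
    rw [hD, Finset.mem_filter, Nat.mem_divisors]
    exact ⟨⟨htdvd, hn0⟩, htnotprime⟩
  have hnD : n ∈ D := by
    rw [hD, Finset.mem_filter]
    exact ⟨Nat.mem_divisors_self n hn0, hnnotprime⟩
  have hsub : ({1, t, n} : Finset ℕ) ⊆ D := by
    intro x hx
    simp only [Finset.mem_insert, Finset.mem_singleton] at hx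
    rcases hx with rfl | rfl | rfl
    · exact h1D
    · exact htD
    · exact hnD
  have hsum3 : ∑ d ∈ ({1, t, n} : Finset ℕ), d = 1 + t + n := by
    rw [Finset.sum_insert (by simp; omega), Finset.sum_insert (by simp; omega),
      Finset.sum_singleton]
    ring
  have hcs : 1 + t + n ≤ compositeSum n := by
    rw [compositeSum, ← hD, ← hsum3]
    exact Finset.sum_le_sum_of_subset hsub
  have key : primeSum n + n < compositeSum n := by omega
  rw [X]
  omega
end

section
/- (Lemma 2) If n = pᵃ·q where p and q are distinct prime numbers and a ≥ 2, then X(n) < 0. -/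
theorem X_neg_of_prime_pow_mul_prime (p q a : ℕ) (hp : p.Prime) (hq : q.Prime)
    (hpq : p ≠ q) (ha : 2 ≤ a) : X (p ^ a * q) < 0 := by
  obtain ⟨n, hn⟩ : ∃ n, n = p ^ a * q := ⟨_, rfl⟩
  rw [← hn]
  have hp2 := hp.two_le
  have hq2 := hq.two_le
  have hpa : p ^ a ≠ 0 := pow_ne_zero _ hp.pos.ne'
  have hn0 : n ≠ 0 := by rw [hn]; exact mul_ne_zero hpa hq.pos.ne'
  have hn0' : p ^ a * q ≠ 0 := hn ▸ hn0
  -- prime factors of n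
  have hpf : n.primeFactors = {p, q} := by
    rw [hn, Nat.primeFactors_mul hpa hq.pos.ne',
      Nat.primeFactors_pow _ (by omega : a ≠ 0), hp.primeFactors, hq.primeFactors]
    rfl
  have hPS : primeSum n = p + q := by
    rw [primeSum, hpf, Finset.sum_insert (by simp [hpq]), Finset.sum_singleton]
  -- filter of prime divisors is primeFactors
  have hfilter : n.divisors.filter (fun d => d.Prime) = n.primeFactors := by
    ext d
    simp only [Finset.mem_filter, Nat.mem_divisors, Nat.mem_primeFactors]
    tauto
  have hsum : compositeSum n + (p + q) = ∑ d ∈ n.divisors, d := by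
    rw [compositeSum, ← hPS, primeSum, ← hfilter, add_comm,
      Finset.sum_filter_add_sum_filter_not n.divisors (fun d => d.Prime)]
  -- the six divisors
  have hsub : ({1, p, q, p ^ 2, p * q, n} : Finset ℕ) ⊆ n.divisors := by
    simp only [Finset.insert_subset_iff, Finset.singleton_subset_iff, Nat.mem_divisors, hn]
    refine ⟨⟨one_dvd _, hn0'⟩, ⟨?_, hn0'⟩, ⟨dvd_mul_left _ _, hn0'⟩, ⟨?_, hn0'⟩, ⟨?_, hn0'⟩,
      dvd_rfl, hn0'⟩
    · exact dvd_mul_of_dvd_left (dvd_pow_self p (by omega)) _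
    · exact dvd_mul_of_dvd_left (pow_dvd_pow p ha) _
    · exact mul_dvd_mul (dvd_pow_self p (by omega)) dvd_rfl
  -- distinctness facts
  have hqp2 : q ≠ p ^ 2 := fun h =>
    hpq ((Nat.prime_dvd_prime_iff_eq hp hq).mp (h ▸ dvd_pow_self p two_ne_zero))
  have hp2n : p ^ 2 ≤ p ^ a := Nat.pow_le_pow_right hp.pos ha
  have hnlb : p ^ 2 * q ≤ n := by rw [hn]; exact Nat.mul_le_mul_right q hp2n
  have hpp2 : p < p ^ 2 := by nlinarith
  have hppq : p < p * q := by nlinarith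
  have hqpq : q < p * q := by nlinarith
  have hp2pq : p ^ 2 ≠ p * q := by
    intro h
    exact hpq (Nat.eq_of_mul_eq_mul_left hp.pos (by rw [← pow_two]; exact h))
  have hp2lt : p ^ 2 < n := by nlinarith
  have hpqlt : p * q < n := by nlinarith
  have hp2ge : 2 * p ≤ p ^ 2 := by nlinarith
  have hpqge : 2 * q ≤ p * q := by nlinarith
  -- sum over the six divisors
  have key : 1 + p + q + p ^ 2 + p * q + n ≤ ∑ d ∈ n.divisors, d := by
    have hcalc : ∑ d ∈ ({1, p, q, p ^ 2, p * q, n} : Finset ℕ), d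
        = 1 + p + q + p ^ 2 + p * q + n := by
      have e1 : (1 : ℕ) < p := by omega
      generalize p ^ 2 = b at *
      generalize p * q = c at *
      rw [Finset.sum_insert (by simp only [Finset.mem_insert, Finset.mem_singleton]; omega),
        Finset.sum_insert (by simp only [Finset.mem_insert, Finset.mem_singleton]; omega),
        Finset.sum_insert (by simp only [Finset.mem_insert, Finset.mem_singleton]; omega),
        Finset.sum_insert (by simp only [Finset.mem_insert, Finset.mem_singleton]; omega),
        Finset.sum_insert (by simp only [Finset.mem_singleton]; omega),
        Finset.sum_singleton]
      ring
    calc 1 + p + q + p ^ 2 + p * q + n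
        = ∑ d ∈ ({1, p, q, p ^ 2, p * q, n} : Finset ℕ), d := hcalc.symm
      _ ≤ ∑ d ∈ n.divisors, d := Finset.sum_le_sum_of_subset hsub
  have hC : n + p + q + 1 ≤ compositeSum n := by omega
  rw [X, hPS]
  push_cast
  omega
end

section
/- (Lemma 3) Let n be a positive integer with X(n) ≤ 0 and let p be a prime number dividing n. Then X(p·n) < 0. -/
lemma primeFactors_eq_filter' (n : ℕ) (hn : n ≠ 0) :
    n.primeFactors = n.divisors.filter (fun d => d.Prime) := by
  ext q
  simp only [Nat.mem_primeFactors, Finset.mem_filter, Nat.mem_divisors]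
  tauto

lemma split_sum (m : ℕ) (hm : m ≠ 0) :
    (primeSum m : ℤ) + compositeSum m = ∑ d ∈ m.divisors, (d : ℤ) := by
  rw [primeSum, compositeSum, primeFactors_eq_filter' m hm]
  push_cast
  exact Finset.sum_filter_add_sum_filter_not _ _ _

theorem X_neg_of_mul_prime_dvd (n p : ℕ) (hn : 0 < n) (hXn : X n ≤ 0)
    (hp : p.Prime) (hdvd : p ∣ n) : X (p * n) < 0 := by
  have hn' : n ≠ 0 := hn.ne'
  have hpn : p * n ≠ 0 := Nat.mul_ne_zero hp.ne_zero hn'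
  have hPF : (p * n).primeFactors = n.primeFactors := by
    rw [Nat.primeFactors_mul hp.ne_zero hn', hp.primeFactors,
      Finset.union_eq_right.mpr (Finset.singleton_subset_iff.mpr
        (Nat.mem_primeFactors.mpr ⟨hp, hdvd, hn'⟩))]
  have hPS : primeSum (p * n) = primeSum n := by rw [primeSum, primeSum, hPF]
  have h1 := split_sum n hn'
  have h2 := split_sum (p * n) hpn
  have hnot : p * n ∉ n.divisors := by
    intro h
    have hle := Nat.le_of_dvd hn (Nat.mem_divisors.mp h).1
    nlinarith [hp.two_le]
  have hsub : insert (p * n) n.divisors ⊆ (p * n).divisors := by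
    intro d hd
    rcases Finset.mem_insert.mp hd with h | h
    · subst h; exact Nat.mem_divisors_self _ hpn
    · exact Nat.mem_divisors.mpr ⟨(Nat.mem_divisors.mp h).1.trans ⟨p, by ring⟩, hpn⟩
  have hsig : (∑ d ∈ n.divisors, (d : ℤ)) + (p * n : ℕ) ≤ ∑ d ∈ (p * n).divisors, (d : ℤ) := by
    calc (∑ d ∈ n.divisors, (d : ℤ)) + (p * n : ℕ)
        = ∑ d ∈ insert (p * n) n.divisors, (d : ℤ) := by
          rw [Finset.sum_insert hnot]; ring
      _ ≤ ∑ d ∈ (p * n).divisors, (d : ℤ) :=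
          Finset.sum_le_sum_of_subset_of_nonneg hsub (by intros; positivity)
  unfold X at *
  rw [hPS] at *
  have hc : ((p * n : ℕ) : ℤ) = (p : ℤ) * n := by push_cast; ring
  have hnpos : (0 : ℤ) < (n : ℤ) := by exact_mod_cast hn
  linarith
end

section
/- If a positive integer n is a product of three or more primes counted with multiplicity (i.e., Ω(n) ≥ 3, where Ω denotes the number of prime factors with multiplicity), then X(n) < 0. -/
lemma len_div_add_one {n p : ℕ} (hn : n ≠ 0) (hp : p ∈ n.primeFactors) :
    (n / p).primeFactorsList.length + 1 = n.primeFactorsList.length := by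
  obtain ⟨hpp, hpd, -⟩ := Nat.mem_primeFactors.mp hp
  obtain ⟨m, rfl⟩ := hpd
  have hm : m ≠ 0 := by rintro rfl; simp at hn
  rw [Nat.mul_div_cancel_left m hpp.pos]
  have hlen := (Nat.perm_primeFactorsList_mul hpp.ne_zero hm).length_eq
  rw [hlen, List.length_append, Nat.primeFactorsList_prime hpp]
  simp [Nat.add_comm]

lemma four_le_of_two_le_len {m : ℕ} (h : 2 ≤ m.primeFactorsList.length) : 4 ≤ m := by
  have hm : m ≠ 0 := by rintro rfl; simp at h
  rcases hl : m.primeFactorsList with _ | ⟨a, _ | ⟨b, l⟩⟩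
  · rw [hl] at h; simp at h
  · rw [hl] at h; simp at h
  · have ha : a.Prime := Nat.prime_of_mem_primeFactorsList (by rw [hl]; simp)
    have hb : b.Prime := Nat.prime_of_mem_primeFactorsList (by rw [hl]; simp [List.mem_cons])
    have hlp : 1 ≤ l.prod := by
      refine List.one_le_prod_of_one_le ?_
      intro x hx
      exact (Nat.prime_of_mem_primeFactorsList (by rw [hl]; simp [List.mem_cons, hx])).one_lt.le
    have := Nat.prod_primeFactorsList hm
    rw [hl] at this
    simp only [List.prod_cons] at this
    calc 4 = 2 * (2 * 1) := by norm_num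
      _ ≤ a * (b * l.prod) := Nat.mul_le_mul ha.two_le (Nat.mul_le_mul hb.two_le hlp)
      _ = m := this

lemma not_prime_of_two_le_len {m : ℕ} (h : 2 ≤ m.primeFactorsList.length) : ¬ m.Prime := by
  intro hm
  rw [Nat.primeFactorsList_prime hm] at h
  simp at h

theorem X_neg_of_three_le_bigOmega (n : ℕ) (hn : 0 < n)
    (h : 3 ≤ (Nat.primeFactorsList n).length) : X n < 0 := by
  have hn0 : n ≠ 0 := hn.ne'
  have hn2 : 2 ≤ n := by
    by_contra h2
    push_neg at h2
    interval_cases n <;> simp_all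
  -- facts about n / p for p a prime factor
  have key : ∀ p ∈ n.primeFactors, 2 ≤ (n / p).primeFactorsList.length := by
    intro p hp
    have := len_div_add_one hn0 hp
    omega
  have hdvd : ∀ p ∈ n.primeFactors, n / p ∣ n := by
    intro p hp
    exact Nat.div_dvd_of_dvd (Nat.mem_primeFactors.mp hp).2.1
  have hnp : ∀ p ∈ n.primeFactors, ¬ (n / p).Prime := fun p hp =>
    not_prime_of_two_le_len (key p hp)
  have h4 : ∀ p ∈ n.primeFactors, 4 ≤ n / p := fun p hp =>
    four_le_of_two_le_len (key p hp)
  have hne : ∀ p ∈ n.primeFactors, n / p ≠ n := by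
    intro p hp
    have hp2 : 2 ≤ p := (Nat.prime_of_mem_primeFactors hp).two_le
    have : n / p < n := Nat.div_lt_self hn (by omega)
    omega
  have hFne : n.primeFactors.Nonempty := Nat.nonempty_primeFactors.mpr hn2
  set P := n.primeFactors.max' hFne with hPdef
  have hPmem : P ∈ n.primeFactors := n.primeFactors.max'_mem hFne
  have hPprime : P.Prime := Nat.prime_of_mem_primeFactors hPmem
  -- the image set S of p ↦ n / p
  have hinj : Set.InjOn (fun p => n / p) n.primeFactors := by
    intro a ha b hb hab
    have hda : a ∣ n := (Nat.mem_primeFactors.mp ha).2.1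
    have hdb : b ∣ n := (Nat.mem_primeFactors.mp hb).2.1
    have hab' : n / a = n / b := hab
    rw [← Nat.div_div_self hda hn0, hab', Nat.div_div_self hdb hn0]
  set S := n.primeFactors.image (fun p => n / p) with hSdef
  have hsumS : ∑ d ∈ S, d = ∑ p ∈ n.primeFactors, n / p := Finset.sum_image
    (fun a ha b hb => hinj (by simpa using ha) (by simpa using hb))
  -- the insert set is a subset of the filtered divisors
  have hnnotprime : ¬ n.Prime := by
    intro hnp
    rw [Nat.primeFactorsList_prime hnp] at h
    simp at h
  have hsubset : insert 1 (insert n S) ⊆ n.divisors.filter (fun d => ¬ d.Prime) := by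
    intro d hd
    simp only [Finset.mem_insert] at hd
    rcases hd with rfl | rfl | hd
    · simp [Nat.mem_divisors, hn0, Nat.not_prime_one]
    · simp [Nat.mem_divisors, hn0, hnnotprime]
    · obtain ⟨p, hp, rfl⟩ := Finset.mem_image.mp hd
      simp only [Finset.mem_filter, Nat.mem_divisors]
      exact ⟨⟨hdvd p hp, hn0⟩, hnp p hp⟩
  have h1notin : (1 : ℕ) ∉ insert n S := by
    simp only [Finset.mem_insert, hSdef, Finset.mem_image]
    push_neg
    refine ⟨by omega, fun p hp => ?_⟩
    have := h4 p hp
    omega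
  have hnnotin : n ∉ S := by
    simp only [hSdef, Finset.mem_image]
    push_neg
    exact fun p hp => hne p hp
  have hCS : 1 + (n + ∑ p ∈ n.primeFactors, n / p) ≤ compositeSum n := by
    rw [← hsumS]
    calc 1 + (n + ∑ d ∈ S, d) = ∑ d ∈ insert 1 (insert n S), d := by
          rw [Finset.sum_insert h1notin, Finset.sum_insert hnnotin]
      _ ≤ compositeSum n := Finset.sum_le_sum_of_subset hsubset
  -- key inequality : ∑ p ≤ ∑ n / p, done in ℤ
  have hkey : (0 : ℤ) ≤ ∑ p ∈ n.primeFactors, (((n / p : ℕ) : ℤ) - (p : ℤ)) := by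
    rcases Finset.eq_empty_or_nonempty (n.primeFactors.erase P) with he | he
    · -- n.primeFactors = {P}; show P ∣ n / P
      have hFeq : n.primeFactors = {P} := by
        apply Finset.eq_singleton_iff_unique_mem.mpr
        refine ⟨hPmem, fun q hq => ?_⟩
        by_contra hqP
        exact (Finset.notMem_empty q) (he ▸ Finset.mem_erase.mpr ⟨hqP, hq⟩)
      have hPle : P ≤ n / P := by
        obtain ⟨q, hqprime, hqdvd⟩ := Nat.exists_prime_and_dvd
          (show n / P ≠ 1 by have := h4 P hPmem; omega)
        have hqn : q ∣ n := hqdvd.trans (hdvd P hPmem)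
        have hqmem : q ∈ n.primeFactors := Nat.mem_primeFactors.mpr ⟨hqprime, hqn, hn0⟩
        rw [hFeq, Finset.mem_singleton] at hqmem
        subst hqmem
        exact Nat.le_of_dvd (by have := h4 P hPmem; omega) hqdvd
      rw [hFeq, Finset.sum_singleton]
      have : (P : ℤ) ≤ ((n / P : ℕ) : ℤ) := by exact_mod_cast hPle
      omega
    · -- at least two distinct primes
      obtain ⟨q, hq⟩ := he
      have herase : ∀ p ∈ n.primeFactors.erase P, (P : ℤ) ≤ ((n / p : ℕ) : ℤ) - (p : ℤ) := by
        intro p hp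
        obtain ⟨hpP, hpmem⟩ := Finset.mem_erase.mp hp
        have hpprime : p.Prime := Nat.prime_of_mem_primeFactors hpmem
        have hpleP : p ≤ P := Finset.le_max' _ p hpmem
        -- P ∣ n / p
        have hPdvd : P ∣ n / p := by
          have hpdvdn : p ∣ n := (Nat.mem_primeFactors.mp hpmem).2.1
          have hmul : p * (n / p) = n := Nat.mul_div_cancel' hpdvdn
          have hPn : P ∣ p * (n / p) := by
            rw [hmul]; exact (Nat.mem_primeFactors.mp hPmem).2.1
          rcases (Nat.Prime.dvd_mul hPprime).mp hPn with hc | hc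
          · exact absurd ((Nat.prime_dvd_prime_iff_eq hPprime hpprime).mp hc)
              (fun hh => hpP hh.symm)
          · exact hc
        have hne2 : n / p ≠ P := fun hh => (hnp p hpmem) (hh ▸ hPprime)
        -- n / p is a positive multiple of P distinct from P, so n / p ≥ 2 P
        obtain ⟨k, hk⟩ := hPdvd
        have hk1 : k ≠ 1 := by rintro rfl; simp at hk; exact hne2 hk
        have hk0 : k ≠ 0 := by rintro rfl; simp only [Nat.mul_zero] at hk; have := h4 p hpmem; omega
        have h2P : 2 * P ≤ n / p := by
          calc 2 * P ≤ P * k := by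
                have : 2 ≤ k := by omega
                calc 2 * P = P * 2 := by ring
                  _ ≤ P * k := Nat.mul_le_mul_left P this
            _ = n / p := hk.symm
        have : ((2 * P : ℕ) : ℤ) ≤ ((n / p : ℕ) : ℤ) := by exact_mod_cast h2P
        push_cast at this ⊢
        have : (p : ℤ) ≤ (P : ℤ) := by exact_mod_cast hpleP
        omega
      have hsum_erase : (P : ℤ) ≤ ∑ p ∈ n.primeFactors.erase P,
          (((n / p : ℕ) : ℤ) - (p : ℤ)) := by
        calc (P : ℤ) ≤ ((n / q : ℕ) : ℤ) - (q : ℤ) := herase q hq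
          _ ≤ _ := Finset.single_le_sum (f := fun p => ((n / p : ℕ) : ℤ) - (p : ℤ))
              (fun p hp => le_trans (by positivity) (herase p hp)) hq
      have hsplit : ∑ p ∈ n.primeFactors, (((n / p : ℕ) : ℤ) - (p : ℤ)) =
          (((n / P : ℕ) : ℤ) - (P : ℤ)) +
          ∑ p ∈ n.primeFactors.erase P, (((n / p : ℕ) : ℤ) - (p : ℤ)) :=
        (Finset.add_sum_erase _ _ hPmem).symm
      have h4P : (4 : ℤ) ≤ ((n / P : ℕ) : ℤ) := by exact_mod_cast h4 P hPmem
      omega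
  -- conclude
  have hcast : (∑ p ∈ n.primeFactors, (((n / p : ℕ) : ℤ) - (p : ℤ))) =
      ((∑ p ∈ n.primeFactors, n / p : ℕ) : ℤ) - (primeSum n : ℤ) := by
    rw [Finset.sum_sub_distrib]
    simp [primeSum]
  have hC : ((1 + (n + ∑ p ∈ n.primeFactors, n / p) : ℕ) : ℤ) ≤ (compositeSum n : ℤ) := by
    exact_mod_cast hCS
  push_cast at hC
  rw [hcast] at hkey
  unfold X
  omega
end

section
/- For a positive integer n, X(n) = 2 if and only if n = 9. -/
lemma sum_split (n : ℕ) : primeSum n + compositeSum n = ∑ d ∈ n.divisors, d := by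
  rw [primeSum, compositeSum, Nat.primeFactors_eq_to_filter_divisors_prime]
  exact Finset.sum_filter_add_sum_filter_not _ _ _

lemma X_eq (n : ℕ) : X n = 2 * (primeSum n : ℤ) + n - ∑ d ∈ n.divisors, d := by
  have := sum_split n
  rw [X]
  push_cast [← this]
  ring

lemma prod_ge_sum (F : Finset ℕ) (h : ∀ x ∈ F, 2 ≤ x) :
    ∑ x ∈ F, x ≤ ∏ x ∈ F, x := by
  induction F using Finset.induction_on with
  | empty => simp
  | @insert a s ha ih =>
    rw [Finset.sum_insert ha, Finset.prod_insert ha]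
    have h2 : 2 ≤ a := h a (Finset.mem_insert_self a s)
    have ih' := ih (fun x hx => h x (Finset.mem_insert_of_mem hx))
    rcases s.eq_empty_or_nonempty with rfl | hs
    · simp
    · have hP : 2 ≤ ∏ x ∈ s, x := by
        obtain ⟨b, hb⟩ := hs
        calc 2 ≤ b := h b (Finset.mem_insert_of_mem hb)
        _ ≤ ∏ x ∈ s, x := Finset.single_le_prod' (f := fun x => x) (fun i hi => (by have := h i (Finset.mem_insert_of_mem hi); show 1 ≤ i; omega)) hb
      nlinarith [ih', hP, h2]

theorem X_eq_two_iff (n : ℕ) (hn : 0 < n) : X n = 2 ↔ n = 9 := by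
  constructor
  · intro h
    rw [X_eq, primeSum] at h
    -- n = 1
    rcases eq_or_ne n 1 with rfl | h1
    · simp at h
    by_cases hp : n.Prime
    · -- n prime : X = 2n - 1
      rw [hp.primeFactors, hp.divisors] at h
      have h2 := hp.two_le
      rw [Finset.sum_singleton, Finset.sum_insert (by simp; omega), Finset.sum_singleton] at h
      exfalso
      push_cast at h
      omega
    -- composite
    have h2 : 2 ≤ n := by omega
    have hn0 : n ≠ 0 := by omega
    have hcard : 1 ≤ n.primeFactors.card :=
      Finset.card_pos.mpr (Nat.nonempty_primeFactors.mpr (by omega))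
    rcases eq_or_lt_of_le hcard with hcard1 | hcard2
    · -- prime power
      obtain ⟨p, a, hpP, ha, rfl⟩ :=
        isPrimePow_iff_card_primeFactors_eq_one.mpr hcard1.symm
      have pp : p.Prime := hpP.nat_prime
      have hp2 := pp.two_le
      have ha2 : 2 ≤ a := by
        rcases a with _ | _ | a
        · omega
        · exact absurd pp (by simpa using hp)
        · omega
      have hp4 : 4 ≤ p ^ 2 := by nlinarith
      rw [Nat.primeFactors_prime_pow (by omega) pp, Finset.sum_singleton] at h
      rcases eq_or_ne a 2 with rfl | ha3
      · -- n = p^2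
        have hdiv : (p ^ 2).divisors = {1, p, p ^ 2} := by
          ext x
          rw [Nat.mem_divisors_prime_pow pp]
          simp only [Finset.mem_insert, Finset.mem_singleton]
          constructor
          · rintro ⟨j, hj, rfl⟩
            interval_cases j <;> simp
          · rintro (rfl | rfl | rfl)
            exacts [⟨0, by omega, by simp⟩, ⟨1, by omega, by simp⟩, ⟨2, by omega, rfl⟩]
        have hlt : p < p ^ 2 := by nlinarith
        have e1 : (1 : ℕ) ∉ ({p, p ^ 2} : Finset ℕ) := by
          simp only [Finset.mem_insert, Finset.mem_singleton]; omega
        have e2 : p ∉ ({p ^ 2} : Finset ℕ) := by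
          simp only [Finset.mem_singleton]; omega
        rw [hdiv, Finset.sum_insert e1, Finset.sum_insert e2, Finset.sum_singleton] at h
        push_cast at h
        have hP3 : (p : ℤ) = 3 := by linear_combination h
        have hP3' : p = 3 := by exact_mod_cast hP3
        subst hP3'; norm_num
      · -- n = p^a, a ≥ 3
        exfalso
        have ha4 : 3 ≤ a := by omega
        have hsub : ({1, p, p ^ 2, p ^ a} : Finset ℕ) ⊆ (p ^ a).divisors := by
          intro x hx
          simp only [Finset.mem_insert, Finset.mem_singleton] at hx
          have hne : p ^ a ≠ 0 := pow_ne_zero _ (by omega)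
          rcases hx with hx | hx | hx | hx <;> rw [hx]
          · exact Nat.mem_divisors.mpr ⟨one_dvd _, hne⟩
          · exact Nat.mem_divisors.mpr ⟨dvd_pow_self p (by omega), hne⟩
          · exact Nat.mem_divisors.mpr ⟨pow_dvd_pow p (by omega), hne⟩
          · exact Nat.mem_divisors.mpr ⟨dvd_rfl, hne⟩
        have hlt1 : p < p ^ 2 := by nlinarith
        have hlt2 : p ^ 2 < p ^ a := Nat.pow_lt_pow_right (by omega) (by omega)
        have hsum : 1 + p + p ^ 2 + p ^ a = ∑ x ∈ ({1, p, p ^ 2, p ^ a} : Finset ℕ), x := by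
          have e1 : (1 : ℕ) ∉ ({p, p ^ 2, p ^ a} : Finset ℕ) := by
            simp only [Finset.mem_insert, Finset.mem_singleton]; omega
          have e2 : p ∉ ({p ^ 2, p ^ a} : Finset ℕ) := by
            simp only [Finset.mem_insert, Finset.mem_singleton]; omega
          have e3 : p ^ 2 ∉ ({p ^ a} : Finset ℕ) := by
            simp only [Finset.mem_singleton]; omega
          rw [Finset.sum_insert e1, Finset.sum_insert e2, Finset.sum_insert e3,
            Finset.sum_singleton]
          ring
        have hle : 1 + p + p ^ 2 + p ^ a ≤ ∑ d ∈ (p ^ a).divisors, d := by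
          rw [hsum]; exact Finset.sum_le_sum_of_subset hsub
        have hle' : ((1 + p + p ^ 2 + p ^ a : ℕ) : ℤ) ≤ ∑ d ∈ (p ^ a).divisors, d := by
          exact_mod_cast hle
        push_cast at hle' h
        nlinarith [hle', h, hp2]
    · -- at least two primes
      obtain ⟨p, hpmem, q, hqmem, hpq⟩ := Finset.one_lt_card.mp hcard2
      have pp : p.Prime := Nat.prime_of_mem_primeFactors hpmem
      have qq : q.Prime := Nat.prime_of_mem_primeFactors hqmem
      have hp2 := pp.two_le
      have hq2 := qq.two_le
      have hpdvd : p ∣ n := Nat.dvd_of_mem_primeFactors hpmem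
      have hqdvd : q ∣ n := Nat.dvd_of_mem_primeFactors hqmem
      have hcop : Nat.Coprime p q := (Nat.coprime_primes pp qq).mpr hpq
      obtain ⟨m, rfl⟩ := hcop.mul_dvd_of_dvd_of_dvd hpdvd hqdvd
      have hm0 : m ≠ 0 := by rintro rfl; simp at hn0
      rcases eq_or_ne m 1 with rfl | hm1
      · -- n = p * q
        exfalso
        simp only [mul_one] at *
        rw [Nat.primeFactors_mul pp.ne_zero qq.ne_zero, pp.primeFactors, qq.primeFactors] at h
        have hsf : ({p} ∪ {q} : Finset ℕ) = {p, q} := by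
          ext x; simp [Finset.mem_union]
        rw [hsf, Finset.sum_insert (by simpa using hpq), Finset.sum_singleton] at h
        have hσ : ∑ d ∈ (p * q).divisors, d = (1 + p) * (1 + q) := by
          have := (ArithmeticFunction.isMultiplicative_sigma (k := 1)).map_mul_of_coprime hcop
          rw [ArithmeticFunction.sigma_one_apply, ArithmeticFunction.sigma_one_apply,
            ArithmeticFunction.sigma_one_apply] at this
          rw [this, pp.divisors, qq.divisors,
            Finset.sum_insert (by simp; omega), Finset.sum_singleton,
            Finset.sum_insert (by simp; omega), Finset.sum_singleton]
        rw [hσ] at h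
        push_cast at h
        have h' : (p : ℤ) + q = 3 := by linear_combination h
        have h'' : p + q = 3 := by exact_mod_cast h'
        omega
      · -- n = p * q * m with m ≥ 2
        exfalso
        have hm2 : 2 ≤ m := by omega
        have hnn0 : p * q * m ≠ 0 := hn0
        -- not-prime facts
        have hqm_np : ¬(q * m).Prime := Nat.not_prime_mul (by omega) (by omega)
        have hpm_np : ¬(p * m).Prime := Nat.not_prime_mul (by omega) (by omega)
        have hpq4 : 4 ≤ p * q := Nat.mul_le_mul hp2 hq2
        have hn_np : ¬(p * q * m).Prime := Nat.not_prime_mul (by omega) hm1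
        -- size facts
        have hqm_lt : q * m < p * q * m := by nlinarith
        have hpm_lt : p * m < p * q * m := by nlinarith
        have hqm_ne_pm : q * m ≠ p * m := by
          intro hcon
          exact hpq (Nat.eq_of_mul_eq_mul_right (by omega) hcon).symm
        -- membership in divisors
        have hTsub : (insert 1 (insert (p * q * m) (insert (q * m) (insert (p * m)
            (p * q * m).primeFactors)))) ⊆ (p * q * m).divisors := by
          intro x hx
          simp only [Finset.mem_insert] at hx
          rcases hx with rfl | rfl | rfl | rfl | hx
          · exact Nat.mem_divisors.mpr ⟨one_dvd _, hnn0⟩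
          · exact Nat.mem_divisors.mpr ⟨dvd_rfl, hnn0⟩
          · exact Nat.mem_divisors.mpr ⟨⟨p, by ring⟩, hnn0⟩
          · exact Nat.mem_divisors.mpr ⟨⟨q, by ring⟩, hnn0⟩
          · exact Nat.mem_divisors.mpr ⟨Nat.dvd_of_mem_primeFactors hx, hnn0⟩
        -- sum of the T set
        have hpm_nm : (p * m) ∉ (p * q * m).primeFactors := fun hc =>
          hpm_np (Nat.prime_of_mem_primeFactors hc)
        have hqm_nm : (q * m) ∉ insert (p * m) (p * q * m).primeFactors := by
          simp only [Finset.mem_insert]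
          rintro (hc | hc)
          · exact hqm_ne_pm hc
          · exact hqm_np (Nat.prime_of_mem_primeFactors hc)
        have hn_nm : (p * q * m) ∉ insert (q * m) (insert (p * m) (p * q * m).primeFactors) := by
          simp only [Finset.mem_insert]
          rintro (hc | hc | hc)
          · omega
          · omega
          · exact hn_np (Nat.prime_of_mem_primeFactors hc)
        have h1_nm : (1 : ℕ) ∉ insert (p * q * m) (insert (q * m) (insert (p * m)
            (p * q * m).primeFactors)) := by
          simp only [Finset.mem_insert]
          have : 2 ≤ q * m := by nlinarith
          have : 2 ≤ p * m := by nlinarith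
          have : 2 ≤ p * q * m := by nlinarith
          rintro (hc | hc | hc | hc)
          · omega
          · omega
          · omega
          · exact Nat.not_prime_one (Nat.prime_of_mem_primeFactors hc)
        have hTsum : ∑ x ∈ (insert 1 (insert (p * q * m) (insert (q * m) (insert (p * m)
            (p * q * m).primeFactors)))), x
            = 1 + p * q * m + q * m + p * m + ∑ x ∈ (p * q * m).primeFactors, x := by
          rw [Finset.sum_insert h1_nm, Finset.sum_insert hn_nm, Finset.sum_insert hqm_nm,
            Finset.sum_insert hpm_nm]
          ring
        have hσge : 1 + p * q * m + q * m + p * m + ∑ x ∈ (p * q * m).primeFactors, x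
            ≤ ∑ d ∈ (p * q * m).divisors, d := by
          rw [← hTsum]; exact Finset.sum_le_sum_of_subset hTsub
        -- primeSum ≤ q*m + p*m
        have hPi : ∑ x ∈ (p * q * m).primeFactors, x ≤ q * m + p * m := by
          have herase : ∑ x ∈ (p * q * m).primeFactors, x
              = q + ∑ x ∈ (p * q * m).primeFactors.erase q, x :=
            (Finset.add_sum_erase _ _ hqmem).symm
          have hsubpm : (p * q * m).primeFactors.erase q ⊆ (p * m).primeFactors := by
            intro r hr
            obtain ⟨hrq, hrmem⟩ := Finset.mem_erase.mp hr
            have rp : r.Prime := Nat.prime_of_mem_primeFactors hrmem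
            have hrd : r ∣ q * (p * m) := by
              have := Nat.dvd_of_mem_primeFactors hrmem
              calc r ∣ p * q * m := this
              _ = q * (p * m) := by ring
            rcases (Nat.Prime.dvd_mul rp).mp hrd with hc | hc
            · exact absurd ((Nat.prime_dvd_prime_iff_eq rp qq).mp hc) hrq
            · exact Nat.mem_primeFactors.mpr ⟨rp, hc, by positivity⟩
          have h1 : ∑ x ∈ (p * q * m).primeFactors.erase q, x
              ≤ ∑ x ∈ (p * m).primeFactors, x := Finset.sum_le_sum_of_subset hsubpm
          have h2' : ∑ x ∈ (p * m).primeFactors, x ≤ ∏ x ∈ (p * m).primeFactors, x :=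
            prod_ge_sum _ (fun x hx => (Nat.prime_of_mem_primeFactors hx).two_le)
          have h3 : ∏ x ∈ (p * m).primeFactors, x ≤ p * m :=
            Nat.le_of_dvd (by positivity) (Nat.prod_primeFactors_dvd _)
          have h4 : q ≤ q * m := Nat.le_mul_of_pos_right q (by omega)
          omega
        -- conclude
        have hσge' : ((1 + p * q * m + q * m + p * m
            + ∑ x ∈ (p * q * m).primeFactors, x : ℕ) : ℤ)
            ≤ ∑ d ∈ (p * q * m).divisors, d := by exact_mod_cast hσge
        have hPi' : ((∑ x ∈ (p * q * m).primeFactors, x : ℕ) : ℤ)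
            ≤ (q : ℤ) * m + p * m := by exact_mod_cast hPi
        push_cast at hσge' h
        linarith [hσge', hPi', h]
  · rintro rfl
    rw [X, primeSum, compositeSum, Nat.primeFactors_eq_to_filter_divisors_prime]
    decide
end

section
/- (Lemma 4) The only even survivor is 2: if n is an even positive integer and n is a survivor, then n = 2. -/
/-- `n` is a survivor if there is a sequence of positive integers starting at `n`
whose successive terms are given by `X`; i.e., all iterates of `X` from `n` stay positive. -/
def Survivor (n : ℕ) : Prop :=
  ∃ a : ℕ → ℕ, a 0 = n ∧ (∀ i, 0 < a i) ∧ ∀ i, (a (i + 1) : ℤ) = X (a i)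

lemma survivor_step (n : ℕ) (h : Survivor n) :
    ∃ k : ℕ, 0 < k ∧ (k : ℤ) = X n ∧ Survivor k := by
  obtain ⟨a, h0, hpos, hstep⟩ := h
  refine ⟨a 1, hpos 1, ?_, ⟨fun i => a (i + 1), rfl, fun i => hpos _, fun i => hstep _⟩⟩
  rw [hstep 0, h0]

lemma compositeSum_lower (n : ℕ) (B : Finset ℕ)
    (hB : B ⊆ n.divisors.filter (fun d => ¬ d.Prime)) :
    ∑ d ∈ B, d ≤ compositeSum n :=
  Finset.sum_le_sum_of_subset hB

lemma primeSum_two_mul_prime (p : ℕ) (hp : p.Prime) (hp2 : p ≠ 2) :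
    primeSum (2 * p) = 2 + p := by
  unfold primeSum
  rw [Nat.primeFactors_mul two_ne_zero hp.ne_zero, Nat.Prime.primeFactors Nat.prime_two,
    hp.primeFactors]
  rw [← Finset.insert_eq, Finset.sum_insert (by simp [Ne.symm hp2]), Finset.sum_singleton]

lemma compositeSum_two_mul_prime (p : ℕ) (hp : p.Prime) (hp2 : p ≠ 2) :
    compositeSum (2 * p) = 1 + 2 * p := by
  unfold compositeSum
  have h2p : ¬ (2 * p).Prime := by
    rw [Nat.prime_mul_iff]
    push_neg
    exact ⟨fun _ => hp.ne_one, fun _ => by norm_num⟩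
  have hset : (2 * p).divisors.filter (fun d => ¬ d.Prime) = {1, 2 * p} := by
    ext d
    simp only [Finset.mem_filter, Nat.mem_divisors, Finset.mem_insert, Finset.mem_singleton]
    constructor
    · rintro ⟨⟨hd, -⟩, hdp⟩
      have hd' : d ∈ (2 * p).divisors :=
        Nat.mem_divisors.mpr ⟨hd, Nat.mul_ne_zero two_ne_zero hp.ne_zero⟩
      rw [Nat.divisors_mul, Nat.Prime.divisors Nat.prime_two, hp.divisors,
        Finset.mem_mul] at hd'
      obtain ⟨x, hx, y, hy, rfl⟩ := hd'
      simp only [Finset.mem_insert, Finset.mem_singleton] at hx hy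
      rcases hx with rfl | rfl <;> rcases hy with rfl | rfl <;>
        simp_all [Nat.prime_two, hp]
    · rintro (rfl | rfl)
      · exact ⟨⟨one_dvd _, Nat.mul_ne_zero two_ne_zero hp.ne_zero⟩, Nat.not_prime_one⟩
      · exact ⟨⟨dvd_rfl, Nat.mul_ne_zero two_ne_zero hp.ne_zero⟩, h2p⟩
  rw [hset, Finset.sum_pair (by nlinarith [hp.two_le])]

lemma X_two_mul_prime (p : ℕ) (hp : p.Prime) (hp2 : p ≠ 2) :
    X (2 * p) = (p : ℤ) + 1 := by
  rw [X, primeSum_two_mul_prime p hp hp2, compositeSum_two_mul_prime p hp hp2]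
  push_cast
  ring

lemma X_neg_of_composite (m : ℕ) (hm : 3 ≤ m) (hmp : ¬ m.Prime) : X (2 * m) < 0 := by
  set n := 2 * m with hn
  have hn0 : n ≠ 0 := by omega
  have hnp : ¬ n.Prime := by
    intro h
    rcases (Nat.Prime.eq_one_or_self_of_dvd h 2 ⟨m, rfl⟩) with h2 | h2 <;> omega
  have h2 : 2 ∈ n.primeFactors := by
    rw [Nat.mem_primeFactors]
    exact ⟨Nat.prime_two, ⟨m, rfl⟩, hn0⟩
  have hPS : primeSum n = 2 + ∑ p ∈ n.primeFactors.erase 2, p := by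
    rw [primeSum, ← Finset.add_sum_erase _ _ h2]
  set S := ∑ p ∈ n.primeFactors.erase 2, p with hS
  by_cases hO : (n.primeFactors.erase 2).Nonempty
  · -- there is an odd prime divisor
    obtain ⟨q, hq⟩ := hO
    have hqmem := hq
    rw [Finset.mem_erase, Nat.mem_primeFactors] at hqmem
    obtain ⟨hq2, hqp, hqd, -⟩ := hqmem
    have hq3 : 3 ≤ q := by
      rcases hqp.two_le.lt_or_eq with h | h
      · omega
      · omega
    have hS3 : 3 ≤ S := le_trans hq3 (Finset.single_le_sum (fun i _ => Nat.zero_le i) hq)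
    -- B = {1, n} ∪ image (2*·) of odd primes
    set I := (n.primeFactors.erase 2).image (fun p => 2 * p) with hI
    have hIsum : ∑ d ∈ I, d = 2 * S := by
      rw [hI, Finset.sum_image (fun a _ b _ h => by omega), hS, Finset.mul_sum]
    have hInotn : n ∉ I := by
      simp only [hI, Finset.mem_image]
      rintro ⟨p, hpmem, hpe⟩
      rw [Finset.mem_erase, Nat.mem_primeFactors] at hpmem
      have : p = m := by omega
      exact hmp (this ▸ hpmem.2.1)
    have hInot1 : (1 : ℕ) ∉ insert n I := by
      simp only [Finset.mem_insert, hI, Finset.mem_image]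
      push_neg
      refine ⟨by omega, ?_⟩
      rintro p hpmem
      rw [Finset.mem_erase, Nat.mem_primeFactors] at hpmem
      have := hpmem.2.1.two_le
      omega
    have hBsub : insert 1 (insert n I) ⊆
        n.divisors.filter (fun d => ¬ d.Prime) := by
      intro d hd
      simp only [Finset.mem_insert] at hd
      rw [Finset.mem_filter, Nat.mem_divisors]
      rcases hd with rfl | rfl | hd
      · exact ⟨⟨one_dvd _, hn0⟩, Nat.not_prime_one⟩
      · exact ⟨⟨dvd_rfl, hn0⟩, hnp⟩
      · simp only [hI, Finset.mem_image] at hd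
        obtain ⟨p, hpmem, rfl⟩ := hd
        rw [Finset.mem_erase, Nat.mem_primeFactors] at hpmem
        obtain ⟨hp2, hpp, hpd, -⟩ := hpmem
        refine ⟨⟨?_, hn0⟩, ?_⟩
        · exact (Nat.Coprime.mul_dvd_of_dvd_of_dvd
            (Nat.coprime_primes Nat.prime_two hpp |>.mpr (Ne.symm hp2))
            ⟨m, rfl⟩ hpd)
        · rw [Nat.prime_mul_iff]
          push_neg
          exact ⟨fun _ => hpp.ne_one, fun _ => by norm_num⟩
    have hBsum : 1 + (n + 2 * S) ≤ compositeSum n := by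
      have := compositeSum_lower n _ hBsub
      rwa [Finset.sum_insert hInot1, Finset.sum_insert hInotn, hIsum] at this
    rw [X, hPS]
    have : (1 : ℤ) + (n + 2 * S) ≤ (compositeSum n : ℤ) := by exact_mod_cast hBsum
    push_cast
    omega
  · -- n is a power of two, m even, n ≥ 8 … use divisors 1, 4, n
    have hS0 : S = 0 := by
      rw [hS, Finset.not_nonempty_iff_eq_empty.mp hO, Finset.sum_empty]
    have h2m : 2 ∣ m := by
      obtain ⟨q, hqp, hqd⟩ := Nat.exists_prime_and_dvd (show m ≠ 1 by omega)
      have hqn : q ∈ n.primeFactors := by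
        rw [Nat.mem_primeFactors]
        exact ⟨hqp, hqd.trans ⟨2, by ring⟩, hn0⟩
      have : q = 2 := by
        by_contra hq2
        exact hO ⟨q, Finset.mem_erase.mpr ⟨hq2, hqn⟩⟩
      exact this ▸ hqd
    have h4 : (4 : ℕ) ∣ n := by
      obtain ⟨t, rfl⟩ := h2m
      exact ⟨t, by ring⟩
    have hn6 : 6 ≤ n := by omega
    have hBsub : ({1, 4, n} : Finset ℕ) ⊆ n.divisors.filter (fun d => ¬ d.Prime) := by
      intro d hd
      simp only [Finset.mem_insert, Finset.mem_singleton] at hd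
      rw [Finset.mem_filter, Nat.mem_divisors]
      rcases hd with rfl | rfl | rfl
      · exact ⟨⟨one_dvd _, hn0⟩, Nat.not_prime_one⟩
      · exact ⟨⟨h4, hn0⟩, by norm_num⟩
      · exact ⟨⟨dvd_rfl, hn0⟩, hnp⟩
    have hBsum : 1 + 4 + n ≤ compositeSum n := by
      have := compositeSum_lower n _ hBsub
      rw [Finset.sum_insert (by simp; omega), Finset.sum_insert (by simp; omega),
        Finset.sum_singleton] at this
      omega
    rw [X, hPS, hS0]
    have : (1 : ℤ) + 4 + n ≤ (compositeSum n : ℤ) := by exact_mod_cast hBsum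
    push_cast
    omega

theorem even_survivor_eq_two (n : ℕ) (hn : 0 < n) (heven : Even n)
    (hsurv : Survivor n) : n = 2 := by
  induction n using Nat.strong_induction_on with
  | _ n ih =>
  obtain ⟨m, hm⟩ := heven
  have hn2 : n = 2 * m := by omega
  subst hn2
  have hm1 : 1 ≤ m := by omega
  rcases Nat.lt_or_ge m 2 with h | h
  · omega
  rcases Nat.lt_or_ge m 3 with h3 | h3
  · -- m = 2, n = 4
    have hm2 : m = 2 := by omega
    subst hm2
    obtain ⟨k, hk, hkX, hks⟩ := survivor_step 4 (by norm_num at hsurv ⊢; exact hsurv)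
    have hpf4 : (4 : ℕ).primeFactors = {2} := by
      rw [show (4 : ℕ) = 2 ^ 2 from rfl, Nat.primeFactors_pow 2 (by norm_num),
        Nat.Prime.primeFactors Nat.prime_two]
    have hdiv4 : (4 : ℕ).divisors = {1, 2, 4} := by decide
    have hX4 : X 4 = 1 := by
      rw [X, primeSum, compositeSum, hpf4, hdiv4]
      rw [Finset.filter_insert, Finset.filter_insert, Finset.filter_singleton]
      simp [Nat.not_prime_one, Nat.prime_two, (by norm_num : ¬ Nat.Prime 4)]
    have hk1 : k = 1 := by omega
    subst hk1
    obtain ⟨k', hk', hk'X, -⟩ := survivor_step 1 hks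
    have hX1 : X 1 = 0 := by
      rw [X, primeSum, compositeSum, Nat.primeFactors_one, Nat.divisors_one,
        Finset.filter_singleton]
      simp [Nat.not_prime_one]
    omega
  · by_cases hmp : m.Prime
    · have hm2 : m ≠ 2 := by omega
      obtain ⟨k, hk, hkX, hks⟩ := survivor_step (2 * m) hsurv
      rw [X_two_mul_prime m hmp hm2] at hkX
      have hkm : k = m + 1 := by omega
      have hkeven : Even k := by
        rw [hkm]; exact (hmp.odd_of_ne_two hm2).add_one
      have := ih k (by omega) hk hkeven hks
      have := hmp.two_le
      omega
    · have hneg := X_neg_of_composite m h3 hmp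
      obtain ⟨k, hk, hkX, -⟩ := survivor_step (2 * m) hsurv
      omega
end

section
/- There is no prime p such that every iterate of the map f(m) = 2m − 1 starting from p is prime: for every prime p there exists i ≥ 1 such that f^{(i)}(p) is not prime. Consequently, there are no infinite 'prime only' sequences generated by X. -/
lemma iter_formula (p : ℕ) (hp : 1 ≤ p) :
    ∀ i : ℕ, (fun m => 2 * m - 1)^[i] p = 2 ^ i * (p - 1) + 1 := by
  intro i
  induction i with
  | zero => simp; omega
  | succ n ih =>
      rw [Function.iterate_succ_apply', ih]
      ring_nf
      omega

theorem no_infinite_prime_chain (p : ℕ) (hp : p.Prime) :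
    ∃ i : ℕ, 1 ≤ i ∧ ¬ ((fun m => 2 * m - 1)^[i] p).Prime := by
  by_cases h2 : p = 2
  · refine ⟨3, by norm_num, ?_⟩
    subst h2
    rw [iter_formula 2 (by norm_num) 3]
    norm_num
  · refine ⟨p - 1, by have := hp.two_le; omega, ?_⟩
    rw [iter_formula p hp.one_lt.le (p - 1)]
    set n := 2 ^ (p - 1) * (p - 1) + 1 with hn
    have hodd : Odd p := hp.odd_of_ne_two h2
    have hpd : p ∣ n := by
      haveI : Fact p.Prime := ⟨hp⟩
      have h2ne : (2 : ZMod p) ≠ 0 := by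
        intro h
        have := (ZMod.natCast_eq_zero_iff 2 p).mp (by exact_mod_cast h)
        have := (Nat.prime_dvd_prime_iff_eq hp Nat.prime_two).mp this
        exact h2 this
      have hf : (2 : ZMod p) ^ (p - 1) = 1 := ZMod.pow_card_sub_one_eq_one h2ne
      have : ((n : ℕ) : ZMod p) = 0 := by
        have hp1 : ((p - 1 : ℕ) : ZMod p) = (p : ZMod p) - 1 := by
          have : (p - 1) + 1 = p := by have := hp.two_le; omega
          have := congrArg (fun k : ℕ => (k : ZMod p)) this
          push_cast at this
          linear_combination this
        push_cast [hn]
        rw [hp1, hf]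
        simp [ZMod.natCast_self]
      exact (ZMod.natCast_eq_zero_iff n p).mp this
    intro hnp
    have h2p : 2 ^ (p - 1) ≥ 2 := by
      have := hp.two_le
      calc 2 ^ (p-1) ≥ 2 ^ 1 := Nat.pow_le_pow_right (by norm_num) (by omega)
        _ = 2 := by norm_num
    have hlt : p < n := by
      have := hp.two_le
      have : 2 * (p - 1) + 1 ≤ n := by
        have := Nat.mul_le_mul_right (p - 1) h2p
        omega
      omega
    have := (Nat.Prime.eq_one_or_self_of_dvd hnp p hpd)
    have := hp.two_le
    omega
end
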